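/- Let Σ₀ be a finite set with a fixpoint-free involution s ↦ s⁻¹, and let a symmetric, irreflexive relation [·,·]=1 ("commutation") on Σ₀ be given that additionally satisfies: s never commutes with s⁻¹, and if [s,t]=1 then [s,t⁻¹]=[s⁻¹,t]=[s⁻¹,t⁻¹]=1. Let σ : Σ₀ → Σ₀ be a bijection preserving commutation (a label-isomorphism), and let β ⊆ Σ₀ be a set of pairwise-commuting elements. Then the map τ(σ,β) := (∏_{s∈β} (σ(s⁻¹), σ(s)⁻¹)) ∘ σ, where (a,b) denotes the transposition swapping a and b, is well-defined (the transpositions involved move pairwise disjoint two-element sets, hence commute) and is again a commutation-preserving bijection of Σ₀. -/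
import Mathlib


/-- The defining property of the permutation `τ₀` which is the product over `s ∈ β` of the
transpositions `(σ(s⁻¹), σ(s)⁻¹)`: it swaps each such pair and fixes everything else.
Then `τ(σ,β) = τ₀ ∘ σ`. -/
def IsTauProd {S : Type*} (inv : S → S) (σ : S → S) (β : Set S) (τ : Equiv.Perm S) : Prop :=
  (∀ s ∈ β, τ (σ (inv s)) = inv (σ s) ∧ τ (inv (σ s)) = σ (inv s)) ∧
  (∀ x : S, (∀ s ∈ β, x ≠ σ (inv s) ∧ x ≠ inv (σ s)) → τ x = x)

/-- `τ(σ,β)` is well-defined (there is a unique permutation realizing the product of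
the disjoint transpositions) and `τ(σ,β)` is again a commutation-preserving bijection of `Σ₀`. -/
theorem tau_well_defined_and_label_iso {S : Type*} [Fintype S] [DecidableEq S]
    (inv : S → S) (hinv : ∀ s, inv (inv s) = s) (hfpf : ∀ s, inv s ≠ s)
    (comm : S → S → Prop)
    (hsymm : ∀ s t, comm s t → comm t s) (hirr : ∀ s, ¬ comm s s)
    (hinvcomm : ∀ s, ¬ comm s (inv s))
    (hcompat : ∀ s t, comm s t → comm s (inv t) ∧ comm (inv s) t ∧ comm (inv s) (inv t))
    (σ : S → S) (hσ : Function.Bijective σ)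
    (hσcomm : ∀ s t, comm s t ↔ comm (σ s) (σ t))
    (β : Set S) (hβ : ∀ s ∈ β, ∀ t ∈ β, s ≠ t → comm s t) :
    (∃! τ : Equiv.Perm S, IsTauProd inv σ β τ) ∧
    (∀ τ : Equiv.Perm S, IsTauProd inv σ β τ →
      Function.Bijective (fun t => τ (σ t)) ∧
      ∀ s t, comm s t ↔ comm (τ (σ s)) (τ (σ t))) := by
  classical
  have hinvinj : Function.Injective inv := fun a b h => by
    rw [← hinv a, h, hinv]
  have hne : ∀ a b, comm a b → a ≠ b := fun a b h hab => hirr b (hab ▸ h)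
  have hciL : ∀ a b, comm (inv a) b ↔ comm a b := by
    intro a b
    constructor
    · intro h; have := (hcompat _ _ h).2.1; rwa [hinv] at this
    · intro h; exact (hcompat _ _ h).2.1
  have hciR : ∀ a b, comm a (inv b) ↔ comm a b := by
    intro a b
    constructor
    · intro h; have := (hcompat _ _ h).1; rwa [hinv] at this
    · intro h; exact (hcompat _ _ h).1
  obtain ⟨σ', hσ'l, hσ'r⟩ := Function.bijective_iff_has_inverse.1 hσ
  have key : ∀ s x, comm (σ (inv s)) x ↔ comm (inv (σ s)) x := by
    intro s x
    rw [hciL]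
    have h1 : comm (σ (inv s)) x ↔ comm (inv s) (σ' x) := by
      conv_lhs => rw [← hσ'r x]
      exact (hσcomm _ _).symm
    have h2 : comm (σ s) x ↔ comm s (σ' x) := by
      conv_lhs => rw [← hσ'r x]
      exact (hσcomm _ _).symm
    rw [h1, h2, hciL]
  -- the mixed pair is "commuting", hence distinct, for distinct s t ∈ β
  have hmix : ∀ s ∈ β, ∀ t ∈ β, s ≠ t → comm (σ (inv s)) (inv (σ t)) := by
    intro s hs t ht hst
    have h1 : comm s t := hβ s hs t ht hst
    have h2 : comm (inv s) t := (hciL _ _).2 h1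
    have h3 : comm (σ (inv s)) (σ t) := (hσcomm _ _).1 h2
    exact (hciR _ _).2 h3
  have huniq : ∀ x s t, s ∈ β → t ∈ β →
      (x = σ (inv s) ∨ x = inv (σ s)) → (x = σ (inv t) ∨ x = inv (σ t)) → s = t := by
    intro x s t hs ht hxs hxt
    by_contra hst
    rcases hxs with h1 | h1 <;> rcases hxt with h2 | h2
    · exact hst (hinvinj (hσ.1 (h1 ▸ h2)))
    · exact hne _ _ (hmix s hs t ht hst) (h1 ▸ h2)
    · exact hne _ _ (hmix t ht s hs (Ne.symm hst)) (h2.symm.trans h1)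
    · exact hst (hσ.1 (hinvinj (h1 ▸ h2)))
  -- the explicit involutive function
  let f : S → S := fun x =>
    if h : ∃ s, s ∈ β ∧ (x = σ (inv s) ∨ x = inv (σ s)) then
      if x = σ (inv h.choose) then inv (σ h.choose) else σ (inv h.choose)
    else x
  have fspec1 : ∀ s ∈ β, f (σ (inv s)) = inv (σ s) := by
    intro s hs
    have h : ∃ u, u ∈ β ∧ (σ (inv s) = σ (inv u) ∨ σ (inv s) = inv (σ u)) :=
      ⟨s, hs, Or.inl rfl⟩
    have hu := h.choose_spec
    have : h.choose = s := huniq _ _ _ hu.1 hs hu.2 (Or.inl rfl)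
    simp only [f, dif_pos h, this]
    simp
  have fspec2 : ∀ s ∈ β, f (inv (σ s)) = σ (inv s) := by
    intro s hs
    have h : ∃ u, u ∈ β ∧ (inv (σ s) = σ (inv u) ∨ inv (σ s) = inv (σ u)) :=
      ⟨s, hs, Or.inr rfl⟩
    have hu := h.choose_spec
    have heq : h.choose = s := huniq _ _ _ hu.1 hs hu.2 (Or.inr rfl)
    simp only [f, dif_pos h, heq]
    by_cases hc : inv (σ s) = σ (inv s)
    · rw [if_pos hc, ← hc]
    · rw [if_neg hc]
  have fspec3 : ∀ x, (∀ s ∈ β, x ≠ σ (inv s) ∧ x ≠ inv (σ s)) → f x = x := by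
    intro x hx
    have h : ¬ ∃ s, s ∈ β ∧ (x = σ (inv s) ∨ x = inv (σ s)) := by
      rintro ⟨s, hs, h | h⟩
      · exact (hx s hs).1 h
      · exact (hx s hs).2 h
    simp only [f, dif_neg h]
  have hfinv : Function.Involutive f := by
    intro x
    by_cases h : ∃ s, s ∈ β ∧ (x = σ (inv s) ∨ x = inv (σ s))
    · obtain ⟨s, hs, hcase⟩ := h
      rcases hcase with h1 | h1
      · rw [h1, fspec1 s hs, fspec2 s hs]
      · rw [h1, fspec2 s hs, fspec1 s hs]
    · push_neg at h
      have hx : ∀ s ∈ β, x ≠ σ (inv s) ∧ x ≠ inv (σ s) := by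
        intro s hs
        exact h s hs
      rw [fspec3 x hx, fspec3 x hx]
  set τ₀ : Equiv.Perm S := hfinv.toPerm with hτ₀
  have hτ₀coe : ∀ x, τ₀ x = f x := fun _ => rfl
  have hτ₀prod : IsTauProd inv σ β τ₀ := by
    refine ⟨fun s hs => ⟨?_, ?_⟩, fun x hx => ?_⟩
    · rw [hτ₀coe]; exact fspec1 s hs
    · rw [hτ₀coe]; exact fspec2 s hs
    · rw [hτ₀coe]; exact fspec3 x hx
  -- any τ with IsTauProd agrees with τ₀
  have hagree : ∀ τ : Equiv.Perm S, IsTauProd inv σ β τ → ∀ x, τ x = τ₀ x := by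
    intro τ ⟨hτ1, hτ2⟩ x
    by_cases h : ∃ s, s ∈ β ∧ (x = σ (inv s) ∨ x = inv (σ s))
    · obtain ⟨s, hs, hcase⟩ := h
      rcases hcase with h1 | h1
      · rw [h1, (hτ1 s hs).1, hτ₀coe, fspec1 s hs]
      · rw [h1, (hτ1 s hs).2, hτ₀coe, fspec2 s hs]
    · push_neg at h
      have hx : ∀ s ∈ β, x ≠ σ (inv s) ∧ x ≠ inv (σ s) := fun s hs => h s hs
      rw [hτ2 x hx, hτ₀coe, fspec3 x hx]
  constructor
  · exact ⟨τ₀, hτ₀prod, fun τ hτ => Equiv.ext (hagree τ hτ)⟩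
  · intro τ hτ
    have hτswap : ∀ a x, comm (τ a) x ↔ comm a x := by
      intro a x
      by_cases h : ∃ s, s ∈ β ∧ (a = σ (inv s) ∨ a = inv (σ s))
      · obtain ⟨s, hs, hcase⟩ := h
        rcases hcase with h1 | h1
        · rw [h1, (hτ.1 s hs).1]
          exact (key s x).symm
        · rw [h1, (hτ.1 s hs).2]
          exact key s x
      · push_neg at h
        rw [hτ.2 a (fun s hs => h s hs)]
    constructor
    · exact τ.bijective.comp hσ
    · intro s t
      have hsymm' : ∀ a b, comm a b ↔ comm b a := fun a b => ⟨hsymm a b, hsymm b a⟩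
      rw [hσcomm s t, ← hτswap (σ s) (σ t), hsymm' (τ (σ s)) (σ t),
        ← hτswap (σ t) (τ (σ s)), hsymm' (τ (σ t)) (τ (σ s))]
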